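/- Let R be a commutative ring. The category of functors from (ℤ, ≤)^op to R-modules (i.e. ℤ-indexed decreasing filtered diagrams ⋯ → X^1 → X^0 → X^{-1} → ⋯ of R-modules) is equivalent to the category of ℤ-graded modules over the ℤ-graded ring R[t] where t has degree −1. -/

import Mathlib

open CategoryTheory

universe u

/-- A ℤ-graded module over the ℤ-graded ring `R[t]` with `t` in degree `-1`:
a ℤ-graded `R`-module `(Mⁿ)` together with `R`-linear maps `t : Mⁿ → Mⁿ⁻¹`
giving the action of `t`. -/
structure GradedReesModule (R : Type u) [CommRing R] : Type (u + 1) where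
  piece : ℤ → ModuleCat.{u} R
  t : ∀ n : ℤ, piece n ⟶ piece (n - 1)

/-- Morphisms of graded `R[t]`-modules: degreewise `R`-linear maps commuting with the
action of `t`. -/
@[ext]
structure GradedReesModuleHom {R : Type u} [CommRing R] (X Y : GradedReesModule R) where
  f : ∀ n : ℤ, X.piece n ⟶ Y.piece n
  comm : ∀ n : ℤ, X.t n ≫ f (n - 1) = f n ≫ Y.t n

instance (R : Type u) [CommRing R] : Category (GradedReesModule R) where
  Hom X Y := GradedReesModuleHom X Y
  id X := ⟨fun _ => 𝟙 _, by intro n; simp⟩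
  comp φ ψ := ⟨fun n => φ.f n ≫ ψ.f n, by
    intro n
    rw [← Category.assoc, φ.comm n, Category.assoc, ψ.comm n, Category.assoc]⟩
  id_comp φ := by apply GradedReesModuleHom.ext; funext n; simp
  comp_id φ := by apply GradedReesModuleHom.ext; funext n; simp
  assoc φ ψ χ := by apply GradedReesModuleHom.ext; funext n; simp

namespace ReesAux

variable {R : Type u} [CommRing R]

/-- the `k`-fold power of `t`. -/
def powMap (X : GradedReesModule R) : ∀ (k : ℕ) (n : ℤ), X.piece n ⟶ X.piece (n - k)
  | 0, n => eqToHom (congrArg X.piece (by omega))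
  | (k+1), n => X.t n ≫ powMap X k (n-1) ≫ eqToHom (congrArg X.piece (by push_cast; ring))

theorem powMap_congr (X : GradedReesModule R) (k : ℕ) {n n' : ℤ} (h : n = n') :
    powMap X k n' = eqToHom (congrArg X.piece h.symm) ≫ powMap X k n ≫
      eqToHom (congrArg X.piece (by rw [h])) := by
  subst h; simp

theorem powMap_cast (X : GradedReesModule R) {k k' : ℕ} (h : k = k') (n : ℤ) :
    powMap X k n = powMap X k' n ≫ eqToHom (congrArg X.piece (by rw [h])) := by
  subst h; simp

theorem powMap_add (X : GradedReesModule R) (j k : ℕ) (n : ℤ) :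
    powMap X (j + k) n = powMap X j n ≫ powMap X k (n - j) ≫
      eqToHom (congrArg X.piece (by push_cast; ring)) := by
  induction j generalizing n with
  | zero =>
    rw [powMap_cast X (Nat.zero_add k) n]
    rw [powMap_congr X k (show n - (0:ℕ) = n by omega)]
    simp only [powMap, Category.assoc, eqToHom_trans]
  | succ j ih =>
    rw [powMap_cast X (show (j+1)+k = (j+k)+1 by omega) n]
    show (X.t n ≫ powMap X (j+k) (n-1) ≫ _) ≫ _ =
      (X.t n ≫ powMap X j (n-1) ≫ _) ≫ _
    rw [ih (n-1)]
    rw [powMap_congr X k (show n - 1 - (j:ℤ) = n - ((j:ℕ)+1:ℕ) by push_cast; ring)]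
    simp

end ReesAux

namespace ReesAux

variable {R : Type u} [CommRing R]

theorem hom_congr {X Y : GradedReesModule R} (φ : GradedReesModuleHom X Y) {a b : ℤ}
    (h : a = b) :
    eqToHom (congrArg X.piece h) ≫ φ.f b = φ.f a ≫ eqToHom (congrArg Y.piece h) := by
  subst h; simp

theorem powMap_natural {X Y : GradedReesModule R} (φ : GradedReesModuleHom X Y) (k : ℕ)
    (n : ℤ) :
    powMap X k n ≫ φ.f (n - k) = φ.f n ≫ powMap Y k n := by
  induction k generalizing n with
  | zero =>
    show eqToHom _ ≫ _ = _ ≫ eqToHom _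
    exact hom_congr φ (by omega)
  | succ k ih =>
    show (X.t n ≫ powMap X k (n-1) ≫ eqToHom _) ≫ _ = _ ≫ Y.t n ≫ powMap Y k (n-1) ≫ eqToHom _
    rw [Category.assoc, Category.assoc, hom_congr φ (by push_cast; ring : n - 1 - (k:ℤ) = n - ((k:ℕ)+1:ℕ)),
      ← Category.assoc (powMap X k (n-1)), ih (n-1), Category.assoc, ← Category.assoc (X.t n),
      φ.comm n, Category.assoc]

def reesFunctor (X : GradedReesModule R) : ℤᵒᵖ ⥤ ModuleCat.{u} R where
  obj n := X.piece n.unop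
  map {n m} f := powMap X (n.unop - m.unop).toNat n.unop ≫
    eqToHom (congrArg X.piece (by have := leOfHom f.unop; omega))
  map_id n := by
    show powMap X (n.unop - n.unop).toNat n.unop ≫ eqToHom _ = 𝟙 _
    rw [powMap_cast X (show (n.unop - n.unop).toNat = 0 by omega)]
    simp only [powMap, Category.assoc, eqToHom_trans, eqToHom_refl]
  map_comp {n m p} f g := by
    have hf := leOfHom f.unop
    have hg := leOfHom g.unop
    show powMap X (n.unop - p.unop).toNat n.unop ≫ eqToHom _ =
      (powMap X (n.unop - m.unop).toNat n.unop ≫ eqToHom _) ≫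
        powMap X (m.unop - p.unop).toNat m.unop ≫ eqToHom _
    rw [powMap_cast X (show (n.unop - p.unop).toNat
        = (n.unop - m.unop).toNat + (m.unop - p.unop).toNat by omega),
      powMap_add,
      powMap_congr X (m.unop - p.unop).toNat
        (show n.unop - ((n.unop - m.unop).toNat : ℤ) = m.unop by omega)]
    simp only [Category.assoc, eqToHom_trans, eqToHom_trans_assoc]
    simp

theorem reesFunctor_map (X : GradedReesModule R) {n m : ℤᵒᵖ} (f : n ⟶ m) :
    (reesFunctor X).map f = powMap X (n.unop - m.unop).toNat n.unop ≫
      eqToHom (congrArg X.piece (by have := leOfHom f.unop; omega)) := rfl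

def ofGraded (R : Type u) [CommRing R] : GradedReesModule R ⥤ (ℤᵒᵖ ⥤ ModuleCat.{u} R) where
  obj X := reesFunctor X
  map {X Y} φ :=
    { app := fun n => φ.f n.unop
      naturality := fun {n m} f => by
        have hf := leOfHom f.unop
        erw [reesFunctor_map, reesFunctor_map, Category.assoc,
          hom_congr φ (show n.unop - (((n.unop - m.unop).toNat : ℕ) : ℤ) = m.unop by omega),
          ← Category.assoc, powMap_natural φ, Category.assoc] }
  map_id X := by
    apply NatTrans.ext
    funext n
    rfl
  map_comp φ ψ := by
    apply NatTrans.ext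
    funext n
    rfl

noncomputable def toGraded (R : Type u) [CommRing R] : (ℤᵒᵖ ⥤ ModuleCat.{u} R) ⥤ GradedReesModule R where
  obj F :=
    { piece := fun n => F.obj (Opposite.op n)
      t := fun n => F.map (homOfLE (show n - 1 ≤ n by omega)).op }
  map α :=
    { f := fun n => α.app (Opposite.op n)
      comm := fun n => α.naturality _ }
  map_id F := rfl
  map_comp α β := rfl

end ReesAux

namespace ReesAux

variable {R : Type u} [CommRing R]

theorem map_of_eq (F : ℤᵒᵖ ⥤ ModuleCat.{u} R) {a b : ℤ} (hle : b ≤ a) (h : a = b) :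
    F.map (homOfLE hle).op = eqToHom (congrArg (fun x => F.obj (Opposite.op x)) h) := by
  subst h
  have : homOfLE hle = 𝟙 a := Subsingleton.elim _ _
  rw [this]
  simp

theorem powMap_toGraded (F : ℤᵒᵖ ⥤ ModuleCat.{u} R) (k : ℕ) (n : ℤ) :
    powMap ((toGraded R).obj F) k n
      = F.map (homOfLE (show n - (k:ℤ) ≤ n by omega)).op := by
  induction k generalizing n with
  | zero =>
    show eqToHom _ = _
    rw [map_of_eq F _ (show n = n - ((0:ℕ):ℤ) by omega)]
    rfl
  | succ k ih =>
    show ((toGraded R).obj F).t n ≫ powMap ((toGraded R).obj F) k (n-1) ≫ eqToHom _ = _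
    rw [ih]
    erw [← map_of_eq F (show n - (((k:ℕ)+1:ℕ):ℤ) ≤ n - 1 - (k:ℤ) by push_cast; omega)
        (show n - 1 - (k:ℤ) = n - (((k:ℕ)+1:ℕ):ℤ) by push_cast; ring)]
    show F.map _ ≫ F.map _ ≫ F.map _ = F.map _
    rw [← F.map_comp, ← F.map_comp]
    exact congrArg F.map (Quiver.Hom.unop_inj (Subsingleton.elim _ _))

theorem reesFunctor_toGraded_map (F : ℤᵒᵖ ⥤ ModuleCat.{u} R) {n m : ℤᵒᵖ} (f : n ⟶ m) :
    (reesFunctor ((toGraded R).obj F)).map f = F.map f := by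
  have hf := leOfHom f.unop
  rw [reesFunctor_map, powMap_toGraded]
  erw [← map_of_eq F (show m.unop ≤ n.unop - (((n.unop - m.unop).toNat : ℕ) : ℤ) by omega)
      (show n.unop - (((n.unop - m.unop).toNat : ℕ) : ℤ) = m.unop by omega)]
  erw [← F.map_comp]
  exact congrArg F.map (Quiver.Hom.unop_inj (Subsingleton.elim _ _))

theorem toGraded_reesFunctor_t (X : GradedReesModule R) (n : ℤ) :
    ((toGraded R).obj ((ofGraded R).obj X)).t n = X.t n := by
  show (reesFunctor X).map (homOfLE (show n - 1 ≤ n by omega)).op = X.t n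
  rw [reesFunctor_map]
  rw [powMap_cast X (show ((n : ℤ) - (n-1)).toNat = 0+1 by omega)]
  simp only [powMap, Category.assoc, eqToHom_trans, eqToHom_refl, Category.comp_id]
  rfl

noncomputable def εIso (X : GradedReesModule R) : (toGraded R).obj ((ofGraded R).obj X) ≅ X where
  hom := ⟨fun n => 𝟙 _, fun n => by rw [toGraded_reesFunctor_t]; exact (Category.comp_id _).trans (Category.id_comp _).symm⟩
  inv := ⟨fun n => 𝟙 _, fun n => by rw [toGraded_reesFunctor_t]; exact (Category.comp_id _).trans (Category.id_comp _).symm⟩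
  hom_inv_id := by
    apply GradedReesModuleHom.ext
    funext n
    show 𝟙 _ ≫ 𝟙 _ = 𝟙 _
    simp
  inv_hom_id := by
    apply GradedReesModuleHom.ext
    funext n
    show 𝟙 _ ≫ 𝟙 _ = 𝟙 _
    simp

noncomputable def reesEquiv (R : Type u) [CommRing R] :
    (ℤᵒᵖ ⥤ ModuleCat.{u} R) ≌ GradedReesModule R :=
  CategoryTheory.Equivalence.mk (toGraded R) (ofGraded R)
    (NatIso.ofComponents
      (fun F => NatIso.ofComponents (fun n => Iso.refl _)
        (fun {n m} f => by
          show F.map f ≫ 𝟙 _ = 𝟙 _ ≫ (reesFunctor ((toGraded R).obj F)).map f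
          rw [reesFunctor_toGraded_map]
          simp
          exact (Category.id_comp _).symm))
      (fun {F G} α => by
        apply NatTrans.ext
        funext n
        show α.app n ≫ 𝟙 _ = 𝟙 _ ≫ α.app n
        simp))
    (NatIso.ofComponents (fun X => εIso X)
      (fun {X Y} φ => by
        apply GradedReesModuleHom.ext
        funext n
        show φ.f n ≫ 𝟙 _ = 𝟙 _ ≫ φ.f n
        simp))

end ReesAux


/-- The category of ℤ-indexed decreasing filtered diagrams
`⋯ → X¹ → X⁰ → X⁻¹ → ⋯` of `R`-modules (functors `(ℤ, ≤)ᵒᵖ → Mod_R`) is equivalent to the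
category of ℤ-graded modules over the ℤ-graded ring `R[t]`, `t` of degree `-1`
(the Rees construction). -/
theorem filtered_equiv_gradedReesModule (R : Type u) [CommRing R] :
    Nonempty ((ℤᵒᵖ ⥤ ModuleCat.{u} R) ≌ GradedReesModule R) :=
  ⟨ReesAux.reesEquiv R⟩
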